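/- arXiv:1704.01077 — 9 statements merged into one kernel-verified Lean document; each statement's English description precedes it below -/
import Mathlib

section
/- Let E be a natural number and let γ, γ̃ : ℕ → ℕ be sequences such that γ̃_k ≥ γ_k for all 0 ≤ k ≤ E. Set r = Σ_{k=0}^{E} γ_k and S = Σ_{k=0}^{E} k·γ_k. Then Σ_{k=1}^{E} k · min( γ̃_k , max( r − Σ_{i=0}^{k−1} γ̃_i , 0 ) ) ≤ S. (This is the neighborhood-based lower bound: instantiating γ_k = γ_k(v), the number of vertices at distance k from a vertex v, E = ecc(v), r = r(v), and S = S(v), it says that S̃(v) := Σ_{k=1}^{ecc(v)} k·min{γ̃_k(v), max{r(v) − Σ_{i=0}^{k−1} γ̃_i(v), 0}} is a lower bound on S(v).) -/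
open Finset

/-- Neighborhood-based lower bound (Proposition 1), stated abstractly:
if `γ̃ k ≥ γ k` for all `k ≤ E`, `r = ∑_{k=0}^{E} γ k` and `S = ∑_{k=0}^{E} k·γ k`, then
`∑_{k=1}^{E} k · min(γ̃ k, max(r − ∑_{i=0}^{k−1} γ̃ i, 0)) ≤ S`. -/
theorem stmt0 (E : ℕ) (γ γt : ℕ → ℕ) (h : ∀ k ≤ E, γ k ≤ γt k) :
    ∑ k ∈ Finset.Icc 1 E, (k : ℤ) *
        min ((γt k : ℤ))
          (max ((∑ i ∈ Finset.range (E + 1), (γ i : ℤ)) -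
            ∑ i ∈ Finset.range k, (γt i : ℤ)) 0)
      ≤ ∑ k ∈ Finset.range (E + 1), (k : ℤ) * (γ k : ℤ) := by
  set r : ℤ := ∑ i ∈ Finset.range (E + 1), (γ i : ℤ) with hr
  set B : ℕ → ℤ := fun j => r - ∑ i ∈ Finset.range j, (γt i : ℤ) with hB
  set t : ℕ → ℤ := fun k => min ((γt k : ℤ)) (max (B k) 0) with ht
  -- swap lemma
  have hswap : ∀ f : ℕ → ℤ, ∑ k ∈ Finset.Icc 1 E, (k : ℤ) * f k
      = ∑ j ∈ Finset.Icc 1 E, ∑ k ∈ Finset.Icc j E, f k := by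
    intro f
    rw [Finset.sum_comm' (s := Finset.Icc 1 E) (t := fun j => Finset.Icc j E)
      (t' := Finset.Icc 1 E) (s' := fun k => Finset.Icc 1 k)
      (f := fun _ k => f k)
      (by intro x y; simp only [Finset.mem_Icc]; omega)]
    apply Finset.sum_congr rfl
    intro k hk
    rw [Finset.sum_const, Nat.card_Icc]
    simp only [Nat.add_sub_cancel, nsmul_eq_mul]
  -- one step bound
  have hstep : ∀ k, t k + max (B (k + 1)) 0 ≤ max (B k) 0 := by
    intro k
    have h1 : t k ≤ (γt k : ℤ) := min_le_left _ _
    have h2 : t k ≤ max (B k) 0 := min_le_right _ _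
    have h3 : B (k + 1) = B k - (γt k : ℤ) := by
      simp [hB, Finset.sum_range_succ]; ring
    have h4 : (0 : ℤ) ≤ (γt k : ℤ) := Nat.cast_nonneg _
    rcases le_total (B (k + 1)) 0 with h5 | h5
    · rw [max_eq_right h5]
      simpa using h2
    · rw [max_eq_left h5]
      have h6 : 0 ≤ B k := by linarith
      rw [max_eq_left h6]
      linarith
  -- iterated step bound
  have hIco : ∀ m j, (∑ k ∈ Finset.Ico j (j + m), t k) + max (B (j + m)) 0 ≤ max (B j) 0 := by
    intro m
    induction m with
    | zero => intro j; simp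
    | succ m ih =>
      intro j
      rw [show j + (m + 1) = (j + m) + 1 from rfl,
        Finset.sum_Ico_succ_top (Nat.le_add_right j m)]
      have := hstep (j + m)
      have := ih j
      linarith
  -- tail bound
  have htail : ∀ j ∈ Finset.Icc 1 E,
      ∑ k ∈ Finset.Icc j E, t k ≤ ∑ k ∈ Finset.Icc j E, (γ k : ℤ) := by
    intro j hj
    rw [Finset.mem_Icc] at hj
    have hjE : j ≤ E + 1 := by omega
    have hmax : max (B j) 0 ≤ ∑ k ∈ Finset.Icc j E, (γ k : ℤ) := by
      have hsplit : (∑ i ∈ Finset.range j, (γ i : ℤ))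
          + ∑ k ∈ Finset.Ico j (E + 1), (γ k : ℤ) = r := by
        rw [hr, ← Finset.sum_range_add_sum_Ico _ hjE]
      have hle : (∑ i ∈ Finset.range j, (γ i : ℤ)) ≤ ∑ i ∈ Finset.range j, (γt i : ℤ) := by
        apply Finset.sum_le_sum
        intro i hi
        rw [Finset.mem_range] at hi
        exact_mod_cast h i (by omega)
      have hpos : (0 : ℤ) ≤ ∑ k ∈ Finset.Ico j (E + 1), (γ k : ℤ) :=
        Finset.sum_nonneg fun _ _ => Nat.cast_nonneg _
      rw [← Finset.Ico_add_one_right_eq_Icc]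
      apply max_le _ hpos
      simp only [hB]
      linarith
    have hsum : ∑ k ∈ Finset.Icc j E, t k ≤ max (B j) 0 := by
      have := hIco (E + 1 - j) j
      rw [show j + (E + 1 - j) = E + 1 by omega] at this
      have hnn : (0 : ℤ) ≤ max (B (E + 1)) 0 := le_max_right _ _
      rw [← Finset.Ico_add_one_right_eq_Icc]
      linarith
    linarith
  calc ∑ k ∈ Finset.Icc 1 E, (k : ℤ) * t k
      = ∑ j ∈ Finset.Icc 1 E, ∑ k ∈ Finset.Icc j E, t k := hswap t
    _ ≤ ∑ j ∈ Finset.Icc 1 E, ∑ k ∈ Finset.Icc j E, (γ k : ℤ) := Finset.sum_le_sum htail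
    _ = ∑ k ∈ Finset.Icc 1 E, (k : ℤ) * (γ k : ℤ) := (hswap _).symm
    _ = ∑ k ∈ Finset.range (E + 1), (k : ℤ) * (γ k : ℤ) := by
        apply Finset.sum_subset
        · intro x hx
          rw [Finset.mem_Icc] at hx
          rw [Finset.mem_range]
          omega
        · intro x hx hx'
          rw [Finset.mem_range] at hx
          rw [Finset.mem_Icc] at hx'
          have : x = 0 := by omega
          simp [this]
end

section
/- Let T be a finite tree (a connected acyclic simple undirected graph) and let s be a vertex of T. Let γ_k(v) denote the number of vertices at distance exactly k from v, let N(s) denote the set of neighbors of s, and let deg(s) = |N(s)|. Then γ_2(s) = Σ_{w ∈ N(s)} γ_1(w) − deg(s), and for every integer k > 2, γ_k(s) = Σ_{w ∈ N(s)} γ_{k−1}(w) − γ_{k−2}(s) · (deg(s) − 1). -/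
open Finset SimpleGraph

private lemma tree_walk_length {V : Type*} {G : SimpleGraph V} (hT : G.IsTree) {a b : V}
    (p : G.Walk a b) (hp : p.IsPath) : p.length = G.dist a b := by
  obtain ⟨q, hq, hql⟩ := hT.isConnected.exists_path_of_dist a b
  rw [(hT.existsUnique_path a b).unique hp hq, hql]

private lemma tree_key {V : Type*} [Fintype V] [DecidableEq V] {G : SimpleGraph V}
    [DecidableRel G.Adj] (hT : G.IsTree) {s x : V} {d : ℕ} (hd : G.dist s x = d) (hd1 : 1 ≤ d) :
    ∃ w₀ ∈ G.neighborFinset s, G.dist w₀ x = d - 1 ∧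
      ∀ w ∈ G.neighborFinset s, w ≠ w₀ → G.dist w x = d + 1 := by
  obtain ⟨p, hp, hpl⟩ := hT.isConnected.exists_path_of_dist s x
  cases p with
  | nil => rw [Walk.length_nil, hd] at hpl; omega
  | @cons _ w₀ _ h q =>
    have hqp : q.IsPath := hp.of_cons
    have hql : q.length = d - 1 := by
      have := hpl
      rw [Walk.length_cons, hd] at this
      omega
    refine ⟨w₀, (G.mem_neighborFinset s w₀).mpr h, ?_, ?_⟩
    · rw [← tree_walk_length hT q hqp, hql]
    · intro w hwS hwne
      have hadj : G.Adj s w := (G.mem_neighborFinset s w).mp hwS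
      have hwsupp : w ∉ (Walk.cons h q).support := by
        intro hw
        have h1 : (Walk.cons h q).getVert 1 = w₀ := by rw [Walk.getVert_cons_succ, Walk.getVert_zero]
        have hts : ((Walk.cons h q).takeUntil w hw).length = 1 := by
          rw [tree_walk_length hT _ (hp.takeUntil hw)]
          exact (G.dist_eq_one_iff_adj).mpr hadj
        have h2 : (Walk.cons h q).getVert 1 = w := by
          conv_lhs => rw [← Walk.take_spec (Walk.cons h q) hw]
          rw [Walk.getVert_append, hts]
          simp
        exact hwne (h2 ▸ h1)
      have hpath : (Walk.cons hadj.symm (Walk.cons h q)).IsPath := hp.cons hwsupp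
      have := tree_walk_length hT _ hpath
      rw [Walk.length_cons, hpl, hd] at this
      omega

private lemma count_lem {V : Type*} [Fintype V] [DecidableEq V] {G : SimpleGraph V}
    [DecidableRel G.Adj] (hT : G.IsTree) (s x : V) (m : ℕ) (hm : 1 ≤ m) :
    (((G.neighborFinset s).filter fun w => G.dist w x = m).card : ℤ) =
      if G.dist s x = m + 1 then 1
      else if x = s ∧ m = 1 then (G.degree s : ℤ)
      else if G.dist s x + 1 = m then (G.degree s : ℤ) - 1
      else 0 := by
  by_cases hxs : x = s
  · subst hxs
    rw [if_neg (by simp [SimpleGraph.dist_self])]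
    by_cases hm1 : m = 1
    · subst hm1
      rw [if_pos ⟨rfl, rfl⟩]
      rw [filter_true_of_mem fun w hw => (G.dist_eq_one_iff_adj).mpr
        (((G.mem_neighborFinset x w).mp hw).symm), card_neighborFinset_eq_degree]
    · rw [if_neg (by tauto), if_neg (by simp [SimpleGraph.dist_self]; omega)]
      rw [filter_false_of_mem fun w hw => by
        have : G.dist w x = 1 := (G.dist_eq_one_iff_adj).mpr
          (((G.mem_neighborFinset x w).mp hw).symm)
        omega, card_empty, Nat.cast_zero]
  · have hd1 : 1 ≤ G.dist s x := hT.isConnected.pos_dist_of_ne (fun h => hxs h.symm)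
    obtain ⟨w₀, hw₀S, hw₀d, hother⟩ := tree_key hT rfl hd1
    by_cases h1 : G.dist s x = m + 1
    · rw [if_pos h1]
      have : (G.neighborFinset s).filter (fun w => G.dist w x = m) = {w₀} := by
        ext w
        simp only [mem_filter, mem_singleton]
        constructor
        · rintro ⟨hwS, hwd⟩
          by_contra hne
          have := hother w hwS hne
          omega
        · rintro rfl
          exact ⟨hw₀S, by omega⟩
      rw [this, card_singleton, Nat.cast_one]
    · rw [if_neg h1, if_neg (by tauto)]
      by_cases h2 : G.dist s x + 1 = m
      · rw [if_pos h2]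
        have he : (G.neighborFinset s).filter (fun w => G.dist w x = m)
            = (G.neighborFinset s).erase w₀ := by
          ext w
          simp only [mem_filter, mem_erase]
          constructor
          · rintro ⟨hwS, hwd⟩
            refine ⟨fun hne => ?_, hwS⟩
            subst hne; omega
          · rintro ⟨hne, hwS⟩
            exact ⟨hwS, by rw [hother w hwS hne]; omega⟩
        rw [he, card_erase_of_mem hw₀S, card_neighborFinset_eq_degree]
        have : 1 ≤ G.degree s := by
          rw [← card_neighborFinset_eq_degree]
          exact card_pos.mpr ⟨w₀, hw₀S⟩
        push_cast [this]
        ring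
      · rw [if_neg h2]
        have : (G.neighborFinset s).filter (fun w => G.dist w x = m) = ∅ := by
          ext w
          simp only [mem_filter, notMem_empty, iff_false, not_and]
          intro hwS hwd
          by_cases hne : w = w₀
          · subst hne; omega
          · have := hother w hwS hne; omega
        rw [this, card_empty, Nat.cast_zero]

private lemma sum_lem {V : Type*} [Fintype V] [DecidableEq V] {G : SimpleGraph V}
    [DecidableRel G.Adj] (hT : G.IsTree) (s : V) (m : ℕ) (hm : 1 ≤ m) :
    (∑ w ∈ G.neighborFinset s, ((univ.filter fun x => G.dist w x = m).card : ℤ)) =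
      ((univ.filter fun x => G.dist s x = m + 1).card : ℤ) +
      (if m = 1 then (G.degree s : ℤ)
       else ((univ.filter fun x => G.dist s x = m - 1).card : ℤ) * ((G.degree s : ℤ) - 1)) := by
  have swap : (∑ w ∈ G.neighborFinset s, ((univ.filter fun x => G.dist w x = m).card : ℤ))
      = ∑ x : V, (((G.neighborFinset s).filter fun w => G.dist w x = m).card : ℤ) := by
    simp_rw [← Finset.sum_boole]
    exact Finset.sum_comm
  rw [swap, Finset.sum_congr rfl (fun x _ => count_lem hT s x m hm),
    ← Finset.sum_filter_add_sum_filter_not univ (fun x => G.dist s x = m + 1)]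
  congr 1
  · rw [Finset.sum_congr rfl (fun x hx => if_pos (mem_filter.mp hx).2), Finset.sum_const,
      nsmul_eq_mul, mul_one]
  · rw [Finset.sum_congr rfl (fun x hx => if_neg (mem_filter.mp hx).2)]
    by_cases hm1 : m = 1
    · subst hm1
      rw [if_pos rfl]
      have hterm : ∀ x ∈ univ.filter (fun x => ¬G.dist s x = 1 + 1),
          (if x = s ∧ 1 = 1 then (G.degree s : ℤ)
            else if G.dist s x + 1 = 1 then (G.degree s : ℤ) - 1 else 0)
          = if x = s then (G.degree s : ℤ) else 0 := by
        intro x hx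
        by_cases hxs : x = s
        · rw [if_pos ⟨hxs, rfl⟩, if_pos hxs]
        · rw [if_neg (by tauto), if_neg hxs, if_neg (by
            have : 1 ≤ G.dist s x := hT.isConnected.pos_dist_of_ne (fun h => hxs h.symm)
            omega)]
      rw [Finset.sum_congr rfl hterm, Finset.sum_ite_eq' _ s (fun _ => (G.degree s : ℤ)),
        if_pos (by simp [SimpleGraph.dist_self])]
    · rw [if_neg hm1]
      have hterm : ∀ x ∈ univ.filter (fun x => ¬G.dist s x = m + 1),
          (if x = s ∧ m = 1 then (G.degree s : ℤ)
            else if G.dist s x + 1 = m then (G.degree s : ℤ) - 1 else 0)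
          = if G.dist s x + 1 = m then (G.degree s : ℤ) - 1 else 0 := by
        intro x hx
        rw [if_neg (by tauto)]
      rw [Finset.sum_congr rfl hterm, ← Finset.sum_filter, filter_filter]
      have hset : (univ.filter fun x => ¬G.dist s x = m + 1 ∧ G.dist s x + 1 = m)
          = univ.filter (fun x => G.dist s x = m - 1) := by
        refine filter_congr fun x _ => by constructor <;> intro h <;> omega
      rw [hset, Finset.sum_const, nsmul_eq_mul]

/-- In a finite tree, with `γ k v` the number of vertices at distance exactly `k` from `v`:
`γ 2 s = ∑_{w ∈ N(s)} γ 1 w − deg s`, and for `k > 2`,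
`γ k s = ∑_{w ∈ N(s)} γ (k−1) w − γ (k−2) s · (deg s − 1)`. -/
theorem stmt1 {V : Type*} [Fintype V] [DecidableEq V] (G : SimpleGraph V)
    [DecidableRel G.Adj] (hT : G.IsTree) (s : V) :
    ((Finset.univ.filter fun w => G.dist s w = 2).card : ℤ) =
        (∑ w ∈ G.neighborFinset s,
          ((Finset.univ.filter fun x => G.dist w x = 1).card : ℤ)) - G.degree s ∧
      ∀ k : ℕ, 2 < k →
        ((Finset.univ.filter fun w => G.dist s w = k).card : ℤ) =
          (∑ w ∈ G.neighborFinset s,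
            ((Finset.univ.filter fun x => G.dist w x = k - 1).card : ℤ)) -
            ((Finset.univ.filter fun w => G.dist s w = k - 2).card : ℤ) *
              ((G.degree s : ℤ) - 1) := by
  constructor
  · have h := sum_lem hT s 1 le_rfl
    rw [if_pos rfl] at h
    norm_num at h ⊢
    rw [h]
    ring
  · intro k hk
    have h := sum_lem hT s (k - 1) (by omega)
    rw [if_neg (by omega)] at h
    simp_rw [show k - 1 + 1 = k by omega, show k - 1 - 1 = k - 2 by omega] at h
    rw [h]
    ring
end

section
/- Let G be a finite connected simple undirected graph and let γ_k(v) denote the number of vertices at distance exactly k from v. For each vertex v define integers γ̃_k(v) recursively by γ̃_1(v) = deg(v), γ̃_2(v) = Σ_{w ∈ N(v)} γ̃_1(w) − deg(v), and γ̃_k(v) = Σ_{w ∈ N(v)} γ̃_{k−1}(w) − γ̃_{k−2}(v)·(deg(v) − 1) for k ≥ 3. Then for every vertex v and every k ≥ 1, γ̃_k(v) ≥ γ_k(v), i.e., the recursively defined quantity is an upper bound on the number of vertices at distance exactly k from v. -/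
open Finset SimpleGraph

/-- The recursively defined upper bound `γ̃` on the number of vertices at each distance:
`γ̃ 1 v = deg v`, `γ̃ 2 v = ∑_{w ∈ N(v)} γ̃ 1 w − deg v`, and for `k ≥ 3`,
`γ̃ k v = ∑_{w ∈ N(v)} γ̃ (k−1) w − γ̃ (k−2) v · (deg v − 1)`. -/
def gammaT {V : Type*} [Fintype V] [DecidableEq V] (G : SimpleGraph V)
    [DecidableRel G.Adj] : ℕ → V → ℤ
  | 0, _ => 1
  | 1, v => G.degree v
  | 2, v => (∑ w ∈ G.neighborFinset v, (G.degree w : ℤ)) - G.degree v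
  | (k + 3), v =>
      (∑ w ∈ G.neighborFinset v, gammaT G (k + 2) w) -
        gammaT G (k + 1) v * ((G.degree v : ℤ) - 1)

namespace NBWaux

variable {V : Type*} [Fintype V] [DecidableEq V] (G : SimpleGraph V) [DecidableRel G.Adj]

/-- The finset of non-backtracking walks of length `k` starting at `v`, encoded as
lists of vertices. -/
def nbws : ℕ → V → Finset (List V)
  | 0, v => {[v]}
  | (k+1), v => ((G.neighborFinset v).biUnion fun w =>
      ((nbws k w).filter fun l => l.tail.head? ≠ some v)).image (v :: ·)

lemma mem_nbws_succ {k : ℕ} {v : V} {l : List V} :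
    l ∈ nbws G (k+1) v ↔ ∃ w ∈ G.neighborFinset v, ∃ m ∈ nbws G k w,
      m.tail.head? ≠ some v ∧ l = v :: m := by
  simp only [nbws, Finset.mem_image, Finset.mem_biUnion, Finset.mem_filter]
  constructor
  · rintro ⟨m, ⟨w, hw, hm, hne⟩, rfl⟩
    exact ⟨w, hw, m, hm, hne, rfl⟩
  · rintro ⟨w, hw, m, hm, hne, rfl⟩
    exact ⟨m, ⟨w, hw, hm, hne⟩, rfl⟩

lemma head?_of_mem_nbws : ∀ {k : ℕ} {v : V} {l : List V}, l ∈ nbws G k v →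
    l.head? = some v
  | 0, v, l, h => by
      simp only [nbws, Finset.mem_singleton] at h; subst h; rfl
  | (k+1), v, l, h => by
      obtain ⟨w, _, m, _, _, rfl⟩ := (mem_nbws_succ G).mp h
      rfl

lemma tail_head?_of_mem_nbws_succ {k : ℕ} {v : V} {l : List V}
    (h : l ∈ nbws G (k+1) v) :
    ∃ w ∈ G.neighborFinset v, l.tail.head? = some w := by
  obtain ⟨w, hw, m, hm, _, rfl⟩ := (mem_nbws_succ G).mp h
  exact ⟨w, hw, by simpa using head?_of_mem_nbws G hm⟩

lemma card_nbws_succ (k : ℕ) (v : V) :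
    (nbws G (k+1) v).card =
      ∑ w ∈ G.neighborFinset v, ((nbws G k w).filter fun l => l.tail.head? ≠ some v).card := by
  rw [nbws, Finset.card_image_of_injective _ (fun a b h => by injection h),
    Finset.card_biUnion]
  intro w hw w' hw' hne
  refine Finset.disjoint_left.mpr fun l hl hl' => ?_
  have h1 := head?_of_mem_nbws G (Finset.mem_filter.mp hl).1
  have h2 := head?_of_mem_nbws G (Finset.mem_filter.mp hl').1
  rw [h1] at h2
  exact hne (Option.some_injective _ h2)

/-- The key exchange bijection: NBWs of length `k+1` from `w` whose second vertex is `v`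
correspond to NBWs of length `k` from `v` whose second vertex is not `w`. -/
lemma card_filter_eq (k : ℕ) {v w : V} (hvw : G.Adj v w) :
    ((nbws G (k+1) w).filter fun l => l.tail.head? = some v).card =
      ((nbws G k v).filter fun m => m.tail.head? ≠ some w).card := by
  apply Finset.card_bij (fun l _ => l.tail)
  · rintro l hl
    rw [Finset.mem_filter] at hl
    obtain ⟨hmem, hhead⟩ := hl
    obtain ⟨u, hu, m, hm, hne, rfl⟩ := (mem_nbws_succ G).mp hmem
    have : m.head? = some u := head?_of_mem_nbws G hm
    simp only [List.tail_cons] at hhead ⊢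
    have hum : m.head? = some v := by rw [this]; rw [this] at hhead; exact hhead
    have : u = v := by rw [this] at hum; exact Option.some_injective _ hum
    subst this
    exact Finset.mem_filter.mpr ⟨hm, hne⟩
  · rintro l₁ hl₁ l₂ hl₂ h
    rw [Finset.mem_filter] at hl₁ hl₂
    obtain ⟨u₁, _, m₁, _, _, rfl⟩ := (mem_nbws_succ G).mp hl₁.1
    obtain ⟨u₂, _, m₂, _, _, rfl⟩ := (mem_nbws_succ G).mp hl₂.1
    simpa using h
  · rintro m hm
    rw [Finset.mem_filter] at hm
    obtain ⟨hmem, hne⟩ := hm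
    refine ⟨w :: m, Finset.mem_filter.mpr ⟨(mem_nbws_succ G).mpr
      ⟨v, by simpa [G.mem_neighborFinset] using hvw.symm, m, hmem, hne, rfl⟩, ?_⟩, rfl⟩
    simpa using head?_of_mem_nbws G hmem

/-- Partition of NBWs of positive length from `v` by their second vertex. -/
lemma sum_card_filter_eq (k : ℕ) (v : V) :
    ∑ w ∈ G.neighborFinset v, ((nbws G (k+1) v).filter fun m => m.tail.head? = some w).card
      = (nbws G (k+1) v).card := by
  rw [eq_comm]
  have := Finset.card_eq_sum_card_fiberwise
    (f := fun m : List V => m.tail.head?) (s := nbws G (k+1) v)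
    (t := (G.neighborFinset v).image some) ?_
  · rw [this, Finset.sum_image (fun a _ b _ h => Option.some_injective _ h)]
  · intro m hm
    obtain ⟨w, hw, hhead⟩ := tail_head?_of_mem_nbws_succ G hm
    dsimp only
    rw [hhead]
    exact Finset.mem_image_of_mem _ hw

lemma sum_card_filter_ne (k : ℕ) (v : V) :
    ∑ w ∈ G.neighborFinset v, ((nbws G (k+1) v).filter fun m => m.tail.head? ≠ some w).card
      + (nbws G (k+1) v).card = G.degree v * (nbws G (k+1) v).card := by
  have h1 : ∀ w ∈ G.neighborFinset v,
      ((nbws G (k+1) v).filter fun m => m.tail.head? ≠ some w).card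
        + ((nbws G (k+1) v).filter fun m => m.tail.head? = some w).card
        = (nbws G (k+1) v).card := by
    intro w _
    rw [add_comm]
    exact Finset.card_filter_add_card_filter_not _
  calc ∑ w ∈ G.neighborFinset v, ((nbws G (k+1) v).filter fun m => m.tail.head? ≠ some w).card
        + (nbws G (k+1) v).card
      = ∑ w ∈ G.neighborFinset v, ((nbws G (k+1) v).filter fun m => m.tail.head? ≠ some w).card
        + ∑ w ∈ G.neighborFinset v, ((nbws G (k+1) v).filter fun m => m.tail.head? = some w).card
        := by rw [sum_card_filter_eq]
    _ = ∑ w ∈ G.neighborFinset v, (((nbws G (k+1) v).filter fun m => m.tail.head? ≠ some w).card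
        + ((nbws G (k+1) v).filter fun m => m.tail.head? = some w).card) := by
        rw [Finset.sum_add_distrib]
    _ = ∑ _w ∈ G.neighborFinset v, (nbws G (k+1) v).card := Finset.sum_congr rfl h1
    _ = G.degree v * (nbws G (k+1) v).card := by
        rw [Finset.sum_const, smul_eq_mul, G.card_neighborFinset_eq_degree]

lemma card_nbws_one (v : V) : (nbws G 1 v).card = G.degree v := by
  rw [card_nbws_succ]
  rw [← G.card_neighborFinset_eq_degree]
  rw [Finset.card_eq_sum_ones (G.neighborFinset v)]
  refine Finset.sum_congr rfl fun w hw => ?_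
  have : (nbws G 0 w).filter (fun l => l.tail.head? ≠ some v) = {[w]} := by
    rw [show nbws G 0 w = {[w]} from rfl]
    rw [Finset.filter_singleton]
    simp
  rw [this, Finset.card_singleton]

/-- `gammaT` counts non-backtracking walks. -/
lemma gammaT_eq_card_nbws : ∀ (k : ℕ) (v : V), gammaT G k v = ((nbws G k v).card : ℤ)
  | 0, v => by simp [gammaT, nbws]
  | 1, v => by rw [gammaT, card_nbws_one]
  | 2, v => by
      rw [gammaT, card_nbws_succ]
      have : ∀ w ∈ G.neighborFinset v,
          (((nbws G 1 w).filter fun l => l.tail.head? ≠ some v).card : ℤ)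
            = (G.degree w : ℤ) - 1 := by
        intro w hw
        have hadj : G.Adj v w := (G.mem_neighborFinset v w).mp hw
        have hsplit := Finset.card_filter_add_card_filter_not
          (s := nbws G 1 w) (p := fun l => l.tail.head? = some v)
        have heq : ((nbws G 1 w).filter fun l => l.tail.head? = some v).card
            = ((nbws G 0 v).filter fun m => m.tail.head? ≠ some w).card :=
          card_filter_eq G 0 hadj
        have h0 : ((nbws G 0 v).filter fun m => m.tail.head? ≠ some w).card = 1 := by
          rw [show nbws G 0 v = {[v]} from rfl, Finset.filter_singleton]
          simp
        have h1 : (nbws G 1 w).card = G.degree w := card_nbws_one G w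
        simp only [ne_eq] at hsplit heq h0 h1 ⊢
        omega
      push_cast
      rw [Finset.sum_congr rfl this]
      rw [Finset.sum_sub_distrib]
      simp [G.card_neighborFinset_eq_degree]
  | (k+3), v => by
      rw [gammaT]
      have ih2 : ∀ w, gammaT G (k+2) w = ((nbws G (k+2) w).card : ℤ) :=
        fun w => gammaT_eq_card_nbws (k+2) w
      have ih1 : gammaT G (k+1) v = ((nbws G (k+1) v).card : ℤ) :=
        gammaT_eq_card_nbws (k+1) v
      rw [Finset.sum_congr rfl fun w _ => ih2 w, ih1]
      -- main counting identity
      have hmain : (nbws G (k+3) v).card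
          + ∑ w ∈ G.neighborFinset v,
              ((nbws G (k+2) w).filter fun l => l.tail.head? = some v).card
          = ∑ w ∈ G.neighborFinset v, (nbws G (k+2) w).card := by
        rw [card_nbws_succ, ← Finset.sum_add_distrib]
        refine Finset.sum_congr rfl fun w hw => ?_
        rw [add_comm]
        exact Finset.card_filter_add_card_filter_not _
      have hswap : ∀ w ∈ G.neighborFinset v,
          ((nbws G (k+2) w).filter fun l => l.tail.head? = some v).card
            = ((nbws G (k+1) v).filter fun m => m.tail.head? ≠ some w).card := by
        intro w hw
        exact card_filter_eq G (k+1) ((G.mem_neighborFinset v w).mp hw)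
      rw [Finset.sum_congr rfl hswap] at hmain
      have hne := sum_card_filter_ne G k v
      -- cast everything to ℤ and conclude
      have hmain' : ((nbws G (k+3) v).card : ℤ)
          + (∑ w ∈ G.neighborFinset v,
              ((nbws G (k+1) v).filter fun m => m.tail.head? ≠ some w).card : ℕ)
          = ∑ w ∈ G.neighborFinset v, ((nbws G (k+2) w).card : ℤ) := by
        exact_mod_cast congrArg (Nat.cast : ℕ → ℤ) hmain
      have hne' : ((∑ w ∈ G.neighborFinset v,
            ((nbws G (k+1) v).filter fun m => m.tail.head? ≠ some w).card : ℕ) : ℤ)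
          + ((nbws G (k+1) v).card : ℤ)
          = (G.degree v : ℤ) * ((nbws G (k+1) v).card : ℤ) := by
        exact_mod_cast congrArg (Nat.cast : ℕ → ℤ) hne
      linarith [hmain', hne']

/-- Any nodup adjacency-chain list is a non-backtracking walk. -/
lemma mem_nbws_of_chain : ∀ (k : ℕ) (v : V) (l : List V), l.length = k + 1 →
    l.head? = some v → l.Chain' G.Adj → l.Nodup → l ∈ nbws G k v
  | 0, v, l, hlen, hhead, _, _ => by
      match l, hlen with
      | [a], _ =>
        simp only [List.head?_cons, Option.some.injEq] at hhead
        subst hhead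
        simp [nbws]
  | (k+1), v, l, hlen, hhead, hchain, hnodup => by
      match l with
      | a :: u :: m =>
        simp only [List.head?_cons, Option.some.injEq] at hhead
        subst a
        have hadj : G.Adj v u := (List.isChain_cons_cons.mp hchain).1
        have hchain' : (u :: m).Chain' G.Adj := (List.isChain_cons_cons.mp hchain).2
        have hnodup' : (u :: m).Nodup := hnodup.of_cons
        have hvnot : v ∉ u :: m := (List.nodup_cons.mp hnodup).1
        have hmem : (u :: m) ∈ nbws G k u :=
          mem_nbws_of_chain k u (u :: m) (by simpa using hlen) rfl hchain' hnodup'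
        refine (mem_nbws_succ G).mpr ⟨u, (G.mem_neighborFinset v u).mpr hadj,
          u :: m, hmem, ?_, rfl⟩
        intro hcontra
        simp only [List.tail_cons] at hcontra
        exact hvnot (List.mem_cons_of_mem _ (List.mem_of_mem_head? hcontra))

end NBWaux

/-- In a finite connected simple undirected graph, the recursively defined `γ̃ k v` is an
upper bound on the number `γ k v` of vertices at distance exactly `k` from `v`, for `k ≥ 1`. -/
theorem stmt2 {V : Type*} [Fintype V] [DecidableEq V] (G : SimpleGraph V)
    [DecidableRel G.Adj] (hG : G.Connected) (v : V) (k : ℕ) (hk : 1 ≤ k) :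
    ((Finset.univ.filter fun w => G.dist v w = k).card : ℤ) ≤ gammaT G k v := by
  rw [NBWaux.gammaT_eq_card_nbws]
  rw [Nat.cast_le]
  -- choose a geodesic path for each vertex at distance k
  have hchoice : ∀ w : V, ∃ p : G.Walk v w, p.IsPath ∧ p.length = G.dist v w :=
    fun w => hG.exists_path_of_dist v w
  choose p hpath hplen using hchoice
  apply Finset.card_le_card_of_injOn (fun w => (p w).support)
  · intro w hw
    rw [Finset.mem_coe, Finset.mem_filter] at hw
    apply NBWaux.mem_nbws_of_chain
    · rw [SimpleGraph.Walk.length_support, hplen, hw.2]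
    · rw [← List.head_eq_iff_head?_eq_some ((p w).support_ne_nil)]
      exact (p w).head_support
    · exact (p w).isChain_adj_support
    · exact (hpath w).support_nodup
  · intro w₁ _ w₂ _ heq
    have h1 : (p w₁).support.getLast (by simp) = w₁ := (p w₁).getLast_support
    have h2 : (p w₂).support.getLast (by simp) = w₂ := (p w₂).getLast_support
    rw [← h1, ← h2]
    congr 1
end

section
/- Let G be a finite simple undirected graph, v a vertex, and d ≥ 0 an integer. Let B_d(v) = {w : d(v,w) ≤ d} be the set of vertices at distance at most d from v, let n_d(v) = |B_d(v)|, let r(v) be the number of vertices reachable from v, and let γ_{d+1}(v) be the number of vertices at distance exactly d+1 from v. If ũ is any upper bound on γ_{d+1}(v), i.e., ũ ≥ γ_{d+1}(v), then S(v) ≥ Σ_{w ∈ B_d(v)} d(v,w) − ũ + (d+2)·(r(v) − n_d(v)). -/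
open Finset SimpleGraph
open scoped Classical

/-- The BFSCut lower bound (Lemma 2): if `ũ ≥ γ_{d+1}(v)` then
`S(v) ≥ ∑_{w ∈ B_d(v)} d(v,w) − ũ + (d+2)·(r(v) − n_d(v))`. -/
theorem stmt3 {V : Type*} [Fintype V] (G : SimpleGraph V) (v : V) (d : ℕ) (u : ℕ)
    (hu : (Finset.univ.filter fun w => G.Reachable v w ∧ G.dist v w = d + 1).card ≤ u) :
    (∑ w ∈ Finset.univ.filter (fun w => G.Reachable v w ∧ G.dist v w ≤ d), (G.dist v w : ℤ))
        - (u : ℤ) + ((d : ℤ) + 2) *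
          (((Finset.univ.filter fun w => G.Reachable v w).card : ℤ) -
            ((Finset.univ.filter fun w => G.Reachable v w ∧ G.dist v w ≤ d).card : ℤ))
      ≤ ∑ w ∈ Finset.univ.filter (fun w => G.Reachable v w), (G.dist v w : ℤ) := by
  set B := Finset.univ.filter (fun w => G.Reachable v w ∧ G.dist v w ≤ d) with hB
  set R := Finset.univ.filter (fun w => G.Reachable v w) with hR
  set C := Finset.univ.filter (fun w => G.Reachable v w ∧ G.dist v w = d + 1) with hC
  have hBR : B ⊆ R := by
    intro w hw
    simp only [hB, hR, mem_filter] at hw ⊢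
    exact ⟨hw.1, hw.2.1⟩
  have hsplit : ∑ w ∈ R, (G.dist v w : ℤ)
      = ∑ w ∈ B, (G.dist v w : ℤ) + ∑ w ∈ R \ B, (G.dist v w : ℤ) := by
    rw [add_comm, Finset.sum_sdiff hBR]
  have hcard : ((R.card : ℤ) - (B.card : ℤ)) = ((R \ B).card : ℤ) := by
    rw [Finset.card_sdiff_of_subset hBR]
    have := Finset.card_le_card hBR
    push_cast [Nat.cast_sub this]
    ring
  have hCeq : (R \ B).filter (fun w => G.dist v w = d + 1) = C := by
    ext w
    simp only [hB, hR, hC, mem_filter, mem_sdiff, mem_univ, true_and]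
    constructor
    · rintro ⟨⟨h1, _⟩, h3⟩
      exact ⟨h1, h3⟩
    · rintro ⟨h1, h2⟩
      exact ⟨⟨h1, fun h => by omega⟩, h2⟩
  have hpt : ∀ w ∈ R \ B,
      ((d : ℤ) + 2) - (if G.dist v w = d + 1 then (1:ℤ) else 0) ≤ (G.dist v w : ℤ) := by
    intro w hw
    simp only [hB, hR, mem_sdiff, mem_filter, mem_univ, true_and, not_and, not_le] at hw
    have h1 : d + 1 ≤ G.dist v w := hw.2 hw.1
    by_cases h : G.dist v w = d + 1
    · simp [h]; omega
    · have : d + 2 ≤ G.dist v w := by omega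
      simp [h]
      exact_mod_cast this
  have hsum : ∑ w ∈ R \ B, (((d : ℤ) + 2) - (if G.dist v w = d + 1 then (1:ℤ) else 0))
      ≤ ∑ w ∈ R \ B, (G.dist v w : ℤ) := Finset.sum_le_sum hpt
  have hleft : ∑ w ∈ R \ B, (((d : ℤ) + 2) - (if G.dist v w = d + 1 then (1:ℤ) else 0))
      = ((d : ℤ) + 2) * ((R \ B).card : ℤ) - (C.card : ℤ) := by
    rw [Finset.sum_sub_distrib, Finset.sum_const, Finset.sum_boole, hCeq]
    ring
  have huC : (C.card : ℤ) ≤ (u : ℤ) := by exact_mod_cast hu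
  rw [hsplit, hcard]
  linarith
end

section
/- Let G be a finite simple undirected graph on n vertices, v a vertex with r(v) ≥ 2, and d ≥ 0 an integer. Let B_d(v) = {w : d(v,w) ≤ d}, n_d(v) = |B_d(v)|, and let ũ ≥ γ_{d+1}(v) be an upper bound on the number of vertices at distance exactly d+1 from v. Then the farness of v satisfies f(v) ≥ (n−1)·( Σ_{w ∈ B_d(v)} d(v,w) − ũ + (d+2)·(r(v) − n_d(v)) ) / (r(v) − 1)². -/
open Finset SimpleGraph
open scoped Classical

/-- The BFSCut lower bound on farness: if `r(v) ≥ 2` and `ũ ≥ γ_{d+1}(v)`, then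
`f(v) ≥ (n−1)·(∑_{w ∈ B_d(v)} d(v,w) − ũ + (d+2)·(r(v) − n_d(v))) / (r(v) − 1)²`. -/
theorem stmt4 {V : Type*} [Fintype V] (G : SimpleGraph V) (v : V) (d : ℕ) (u : ℕ)
    (hr : 2 ≤ (Finset.univ.filter fun w => G.Reachable v w).card)
    (hu : (Finset.univ.filter fun w => G.Reachable v w ∧ G.dist v w = d + 1).card ≤ u) :
    ((Fintype.card V : ℝ) - 1) *
        ((∑ w ∈ Finset.univ.filter (fun w => G.Reachable v w ∧ G.dist v w ≤ d),
            (G.dist v w : ℝ))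
          - (u : ℝ) + ((d : ℝ) + 2) *
            (((Finset.univ.filter fun w => G.Reachable v w).card : ℝ) -
              ((Finset.univ.filter fun w => G.Reachable v w ∧ G.dist v w ≤ d).card : ℝ))) /
        (((Finset.univ.filter fun w => G.Reachable v w).card : ℝ) - 1) ^ 2
      ≤ ((Fintype.card V : ℝ) - 1) *
          (∑ w ∈ Finset.univ.filter (fun w => G.Reachable v w), (G.dist v w : ℝ)) /
          (((Finset.univ.filter fun w => G.Reachable v w).card : ℝ) - 1) ^ 2 := by
  set A := Finset.univ.filter fun w => G.Reachable v w with hA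
  set B := Finset.univ.filter fun w => G.Reachable v w ∧ G.dist v w ≤ d with hB
  set E := Finset.univ.filter fun w => G.Reachable v w ∧ G.dist v w = d + 1 with hE
  have hBA : B ⊆ A := by
    intro w hw
    simp only [hA, hB, mem_filter, mem_univ, true_and] at *
    exact hw.1
  have hcardBA : B.card ≤ A.card := Finset.card_le_card hBA
  have hsplit : (∑ w ∈ A, (G.dist v w : ℝ)) =
      (∑ w ∈ B, (G.dist v w : ℝ)) + ∑ w ∈ A \ B, (G.dist v w : ℝ) := by
    rw [add_comm, Finset.sum_sdiff hBA]
  have hcardsd : ((A \ B).card : ℝ) = (A.card : ℝ) - (B.card : ℝ) := by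
    rw [Finset.card_sdiff_of_subset hBA]
    push_cast [Nat.cast_sub hcardBA]
    ring
  -- pointwise bound on A \ B
  have hpt : ∀ w ∈ A \ B, ((d : ℝ) + 2) - (if w ∈ E then (1 : ℝ) else 0) ≤ (G.dist v w : ℝ) := by
    intro w hw
    rw [Finset.mem_sdiff] at hw
    obtain ⟨hwA, hwB⟩ := hw
    simp only [hA, mem_filter, mem_univ, true_and] at hwA
    simp only [hB, mem_filter, mem_univ, true_and, not_and, not_le] at hwB
    have hd1 : d + 1 ≤ G.dist v w := hwB hwA
    by_cases hwE : w ∈ E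
    · simp only [hwE, if_true]
      have : ((d : ℝ) + 1) ≤ (G.dist v w : ℝ) := by exact_mod_cast hd1
      linarith
    · simp only [hwE, if_false, sub_zero]
      have hne : G.dist v w ≠ d + 1 := by
        intro h
        exact hwE (by simp only [hE, mem_filter, mem_univ, true_and]; exact ⟨hwA, h⟩)
      have : d + 2 ≤ G.dist v w := by omega
      exact_mod_cast this
  have hsumE : (∑ w ∈ A \ B, (if w ∈ E then (1 : ℝ) else 0)) ≤ (u : ℝ) := by
    rw [Finset.sum_ite_mem]
    have h1 : ((A \ B) ∩ E).card ≤ E.card := Finset.card_le_card (Finset.inter_subset_right)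
    have : (((A \ B) ∩ E).card : ℝ) ≤ (u : ℝ) := by exact_mod_cast le_trans h1 hu
    simpa using this
  have hlow : ((d : ℝ) + 2) * ((A.card : ℝ) - (B.card : ℝ)) - (u : ℝ) ≤
      ∑ w ∈ A \ B, (G.dist v w : ℝ) := by
    have h2 : ∑ w ∈ A \ B, (((d : ℝ) + 2) - (if w ∈ E then (1 : ℝ) else 0)) ≤
        ∑ w ∈ A \ B, (G.dist v w : ℝ) := Finset.sum_le_sum hpt
    rw [Finset.sum_sub_distrib, Finset.sum_const, nsmul_eq_mul] at h2
    calc ((d : ℝ) + 2) * ((A.card : ℝ) - (B.card : ℝ)) - (u : ℝ)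
        ≤ ((A \ B).card : ℝ) * ((d : ℝ) + 2) - ∑ w ∈ A \ B, (if w ∈ E then (1 : ℝ) else 0) := by
          rw [hcardsd]; linarith
      _ ≤ _ := h2
  have hnum : (∑ w ∈ B, (G.dist v w : ℝ)) - (u : ℝ) +
      ((d : ℝ) + 2) * ((A.card : ℝ) - (B.card : ℝ)) ≤ ∑ w ∈ A, (G.dist v w : ℝ) := by
    rw [hsplit]; linarith
  have hn : 2 ≤ Fintype.card V := le_trans hr (Finset.card_le_card (Finset.subset_univ A) |>.trans (by simp))
  have hn' : (1 : ℝ) ≤ (Fintype.card V : ℝ) := by exact_mod_cast Nat.one_le_of_lt hn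
  have hden : (0 : ℝ) < ((A.card : ℝ) - 1) ^ 2 := by
    have h2 : (2 : ℝ) ≤ (A.card : ℝ) := by exact_mod_cast hr
    have h3 : (0 : ℝ) < (A.card : ℝ) - 1 := by linarith
    exact pow_pos h3 2
  gcongr (((Fintype.card V : ℝ) - 1) * ?_) / _
end

section
/- Let G be a finite simple undirected graph, s a vertex, and v a vertex reachable from s. Then S(v) ≥ 2·( #{ w ∈ R(s) : | d(s,w) − d(s,v) | ≤ 1 } − deg(v) − 1 ) + deg(v) + Σ_{w ∈ R(s), | d(s,w) − d(s,v) | > 1} | d(s,w) − d(s,v) |. (This improves the bound Σ_{w ∈ R(s)} |d(s,w) − d(s,v)| ≤ S(v) by using that v has exactly deg(v) vertices at distance 1, so every vertex w ≠ v with |d(s,w) − d(s,v)| ≤ 1 that is not a neighbor of v is at distance at least 2 from v.) -/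
open Finset SimpleGraph
open scoped Classical

private lemma reach_dist_triangle {V : Type*} (G : SimpleGraph V) {u v w : V}
    (h1 : G.Reachable u v) (h2 : G.Reachable v w) :
    G.dist u w ≤ G.dist u v + G.dist v w := by
  obtain ⟨p, hp⟩ := h1.exists_walk_length_eq_dist
  obtain ⟨q, hq⟩ := h2.exists_walk_length_eq_dist
  rw [← hp, ← hq, ← SimpleGraph.Walk.length_append]
  apply SimpleGraph.dist_le

private lemma abs_diff_le_dist {V : Type*} (G : SimpleGraph V) {s v w : V}
    (h1 : G.Reachable s v) (h2 : G.Reachable v w) :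
    |(G.dist s w : ℤ) - (G.dist s v : ℤ)| ≤ (G.dist v w : ℤ) := by
  rw [abs_sub_le_iff]
  constructor
  · have := reach_dist_triangle G h1 h2
    omega
  · have h3 := reach_dist_triangle G (h1.trans h2) h2.symm
    rw [SimpleGraph.dist_comm (u := w) (v := v)] at h3
    omega

/-- The improved level-based lower bound: for `v` reachable from `s`,
`S(v) ≥ 2·(#{w ∈ R(s) : |d(s,w) − d(s,v)| ≤ 1} − deg v − 1) + deg v
      + ∑_{w ∈ R(s), |d(s,w) − d(s,v)| > 1} |d(s,w) − d(s,v)|`. -/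
theorem stmt8 {V : Type*} [Fintype V] [DecidableEq V] (G : SimpleGraph V)
    [DecidableRel G.Adj] (s v : V) (hv : G.Reachable s v) :
    2 * (((Finset.univ.filter fun w =>
            G.Reachable s w ∧ |(G.dist s w : ℤ) - (G.dist s v : ℤ)| ≤ 1).card : ℤ)
          - (G.degree v : ℤ) - 1)
        + (G.degree v : ℤ)
        + ∑ w ∈ Finset.univ.filter
            (fun w => G.Reachable s w ∧ 1 < |(G.dist s w : ℤ) - (G.dist s v : ℤ)|),
            |(G.dist s w : ℤ) - (G.dist s v : ℤ)|
      ≤ ∑ w ∈ Finset.univ.filter (fun w => G.Reachable v w), (G.dist v w : ℤ) := by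
  set A := Finset.univ.filter fun w =>
      G.Reachable s w ∧ |(G.dist s w : ℤ) - (G.dist s v : ℤ)| ≤ 1 with hA
  set B := Finset.univ.filter fun w =>
      G.Reachable s w ∧ 1 < |(G.dist s w : ℤ) - (G.dist s v : ℤ)| with hB
  set F := Finset.univ.filter fun w => G.Reachable v w with hF
  have hreach : ∀ w, G.Reachable s w ↔ G.Reachable v w :=
    fun w => ⟨fun h => hv.symm.trans h, fun h => hv.trans h⟩
  have hdisj : Disjoint A B := by
    rw [Finset.disjoint_filter]
    rintro w _ ⟨_, h1⟩ ⟨_, h2⟩; omega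
  have hunion : A ∪ B = F := by
    ext w
    simp only [hA, hB, hF, Finset.mem_union, Finset.mem_filter, Finset.mem_univ, true_and,
      ← hreach w]
    constructor
    · rintro (⟨h, _⟩ | ⟨h, _⟩) <;> exact h
    · intro h; by_cases hle : |(G.dist s w : ℤ) - (G.dist s v : ℤ)| ≤ 1
      · exact Or.inl ⟨h, hle⟩
      · exact Or.inr ⟨h, by omega⟩
  have hsplit : ∑ w ∈ F, (G.dist v w : ℤ)
      = ∑ w ∈ A, (G.dist v w : ℤ) + ∑ w ∈ B, (G.dist v w : ℤ) := by
    rw [← hunion, Finset.sum_union hdisj]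
  -- bound on B
  have hBbound : ∑ w ∈ B, |(G.dist s w : ℤ) - (G.dist s v : ℤ)|
      ≤ ∑ w ∈ B, (G.dist v w : ℤ) := by
    apply Finset.sum_le_sum
    intro w hw
    rw [hB, Finset.mem_filter] at hw
    exact abs_diff_le_dist G hv ((hreach w).mp hw.2.1)
  -- bound on A
  have hNsub : insert v (G.neighborFinset v) ⊆ A := by
    intro w hw
    rw [Finset.mem_insert, SimpleGraph.mem_neighborFinset] at hw
    rw [hA, Finset.mem_filter]
    rcases hw with rfl | hadj
    · exact ⟨Finset.mem_univ w, hv, by simp⟩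
    · refine ⟨Finset.mem_univ w, hv.trans hadj.reachable, ?_⟩
      exact le_trans (abs_diff_le_dist G hv hadj.reachable)
        (by rw [SimpleGraph.dist_eq_one_iff_adj.mpr hadj]; norm_num)
  have hvnot : v ∉ G.neighborFinset v := by simp
  have hcardN : (insert v (G.neighborFinset v)).card = G.degree v + 1 := by
    rw [Finset.card_insert_of_notMem hvnot, SimpleGraph.card_neighborFinset_eq_degree]
  have hAbound : 2 * ((A.card : ℤ) - (G.degree v : ℤ) - 1) + (G.degree v : ℤ)
      ≤ ∑ w ∈ A, (G.dist v w : ℤ) := by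
    have hsplitA : ∑ w ∈ A, (G.dist v w : ℤ)
        = ∑ w ∈ insert v (G.neighborFinset v), (G.dist v w : ℤ)
          + ∑ w ∈ A \ insert v (G.neighborFinset v), (G.dist v w : ℤ) := by
      rw [← Finset.sum_union (Finset.disjoint_sdiff),
        Finset.union_sdiff_of_subset hNsub]
    have hNsum : ∑ w ∈ insert v (G.neighborFinset v), (G.dist v w : ℤ)
        = (G.degree v : ℤ) := by
      rw [Finset.sum_insert hvnot, SimpleGraph.dist_self]
      have h1 : ∀ w ∈ G.neighborFinset v, (G.dist v w : ℤ) = 1 := by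
        intro w hw
        rw [SimpleGraph.mem_neighborFinset] at hw
        rw [SimpleGraph.dist_eq_one_iff_adj.mpr hw]; norm_num
      rw [Finset.sum_congr rfl h1, Finset.sum_const, ← SimpleGraph.card_neighborFinset_eq_degree]
      simp
    have hrest : 2 * ((A \ insert v (G.neighborFinset v)).card : ℤ)
        ≤ ∑ w ∈ A \ insert v (G.neighborFinset v), (G.dist v w : ℤ) := by
      rw [Finset.card_eq_sum_ones]
      push_cast
      rw [Finset.mul_sum]
      apply Finset.sum_le_sum
      intro w hw
      rw [Finset.mem_sdiff, Finset.mem_insert, SimpleGraph.mem_neighborFinset] at hw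
      obtain ⟨hwA, hwne⟩ := hw
      push_neg at hwne
      rw [hA, Finset.mem_filter] at hwA
      have hr : G.Reachable v w := (hreach w).mp hwA.2.1
      have hpos : 0 < G.dist v w := hr.pos_dist_of_ne (Ne.symm hwne.1)
      have hne1 : G.dist v w ≠ 1 := fun h =>
        hwne.2 (SimpleGraph.dist_eq_one_iff_adj.mp h)
      have : 2 ≤ G.dist v w := by omega
      exact_mod_cast this
    have hcard : ((A \ insert v (G.neighborFinset v)).card : ℤ)
        = (A.card : ℤ) - (G.degree v : ℤ) - 1 := by
      rw [Finset.card_sdiff_of_subset hNsub, hcardN]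
      have := Finset.card_le_card hNsub
      rw [hcardN] at this
      omega
    rw [hcard] at hrest
    rw [hsplitA, hNsum]
    omega
  rw [hsplit]
  omega
end

section
/- Let n be a real number with n > 1, let r ≥ 3 be an integer, and let S : ℕ → ℝ be a function with S(ρ) > 0 for ρ ∈ {r−1, r, r+1} satisfying S(r+1) − S(r) ≤ S(r) − S(r−1). Define f(ρ) = (n−1)·S(ρ)/(ρ−1)². Then min( f(r+1), f(r−1) ) ≤ f(r). -/
/-- Lemma 3: if `S(r+1) − S(r) ≤ S(r) − S(r−1)` and `f(ρ) = (n−1)·S(ρ)/(ρ−1)²`, then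
`min(f(r+1), f(r−1)) ≤ f(r)`. -/
theorem stmt10 (n : ℝ) (hn : 1 < n) (r : ℕ) (hr : 3 ≤ r) (S : ℕ → ℝ)
    (hpos : ∀ ρ ∈ ({r - 1, r, r + 1} : Set ℕ), 0 < S ρ)
    (hconc : S (r + 1) - S r ≤ S r - S (r - 1)) :
    min ((n - 1) * S (r + 1) / (((r + 1 : ℕ) : ℝ) - 1) ^ 2)
        ((n - 1) * S (r - 1) / (((r - 1 : ℕ) : ℝ) - 1) ^ 2) ≤
      (n - 1) * S r / ((r : ℝ) - 1) ^ 2 := by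
  have ha := hpos (r - 1) (by simp)
  have hb := hpos r (by simp)
  have hc := hpos (r + 1) (by simp)
  set a := S (r - 1)
  set b := S r
  set c := S (r + 1)
  have hx : (3 : ℝ) ≤ (r : ℝ) := by exact_mod_cast hr
  have hcast : ((r - 1 : ℕ) : ℝ) = (r : ℝ) - 1 := by
    have : 1 ≤ r := by omega
    push_cast [this]; ring
  rw [hcast]
  push_cast
  by_contra h
  push_neg at h
  rw [lt_min_iff] at h
  obtain ⟨h1, h2⟩ := h
  have hk : (0 : ℝ) < n - 1 := by linarith
  have hx2 : (0 : ℝ) < (r : ℝ) - 1 - 1 := by linarith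
  have hx1 : (0 : ℝ) < (r : ℝ) - 1 := by linarith
  have hx0 : (0 : ℝ) < (r : ℝ) + 1 - 1 := by linarith
  rw [div_lt_div_iff₀ (pow_pos hx1 2) (pow_pos hx0 2)] at h1
  rw [div_lt_div_iff₀ (pow_pos hx1 2) (pow_pos hx2 2)] at h2
  nlinarith [mul_pos hk hb, mul_le_mul_of_nonneg_left (mul_le_mul_of_nonneg_right (by linarith : a + c ≤ 2 * b) (sq_nonneg ((r:ℝ) - 1))) hk.le]
end

section
/- Let (𝒱, ℰ) be a finite directed acyclic graph (i.e., there is no nontrivial directed cycle), let w : 𝒱 → ℝ≥0 be a weight function, and for C ∈ 𝒱 let Reach(C) denote the set of vertices reachable from C by a directed path (with C ∈ Reach(C)). Suppose ω : 𝒱 → ℝ satisfies, for every C, ω(C) = w(C) + Σ_{(C,D) ∈ ℰ} ω(D). Then for every C ∈ 𝒱, ω(C) ≥ Σ_{D ∈ Reach(C)} w(D). -/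
open Finset
open scoped Classical

private lemma sum_biUnion_le_aux {ι α : Type*} [DecidableEq α]
    {w : α → ℝ} (hw : ∀ a, 0 ≤ w a) (s : Finset ι) (t : ι → Finset α) :
    ∑ x ∈ s.biUnion t, w x ≤ ∑ i ∈ s, ∑ x ∈ t i, w x := by
  induction s using Finset.induction with
  | empty => simp
  | insert _ _ hnot ih =>
    rename_i a s
    rw [Finset.biUnion_insert, Finset.sum_insert hnot]
    have h1 : ∑ x ∈ t a ∪ s.biUnion t, w x ≤ ∑ x ∈ t a, w x + ∑ x ∈ s.biUnion t, w x := by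
      rw [← Finset.sum_union_inter]
      have : 0 ≤ ∑ x ∈ t a ∩ s.biUnion t, w x := Finset.sum_nonneg fun i _ => hw i
      linarith
    exact h1.trans (by gcongr)

/-- In a finite DAG with nonnegative vertex weights, if
`ω C = w C + ∑_{(C,D) ∈ ℰ} ω D`, then `ω C ≥ ∑_{D ∈ Reach(C)} w D`. -/
theorem stmt12 {V : Type*} [Fintype V] (E : V → V → Prop)
    (hacyc : ∀ C : V, ¬ Relation.TransGen E C C)
    (w : V → ℝ) (hw : ∀ C, 0 ≤ w C) (ω : V → ℝ)
    (hω : ∀ C : V, ω C = w C + ∑ D ∈ Finset.univ.filter (fun D => E C D), ω D) :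
    ∀ C : V, (∑ D ∈ Finset.univ.filter (fun D => Relation.ReflTransGen E C D), w D) ≤ ω C := by
  have wf : WellFounded (fun D C : V => Relation.TransGen E C D) := by
    have : IsIrrefl V (fun D C : V => Relation.TransGen E C D) :=
      ⟨fun a h => hacyc a h⟩
    have : IsTrans V (fun D C : V => Relation.TransGen E C D) :=
      ⟨fun a b c hab hbc => hbc.trans hab⟩
    exact Finite.wellFounded_of_trans_of_irrefl _
  intro C
  induction C using wf.induction with
  | _ C ih =>
    have hmemC : C ∈ Finset.univ.filter (fun D => Relation.ReflTransGen E C D) := by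
      simp [Relation.ReflTransGen.refl]
    rw [← Finset.insert_erase hmemC, Finset.sum_insert (Finset.notMem_erase _ _), hω C]
    gcongr
    have hsub : (Finset.univ.filter (fun D => Relation.ReflTransGen E C D)).erase C ⊆
        (Finset.univ.filter (fun D => E C D)).biUnion
          (fun D => Finset.univ.filter (fun X => Relation.ReflTransGen E D X)) := by
      intro x hx
      simp only [Finset.mem_erase, Finset.mem_filter, Finset.mem_univ, true_and] at hx
      obtain ⟨hne, hr⟩ := hx
      rcases hr.cases_head with h | ⟨b, hb, hbr⟩
      · exact absurd h.symm hne
      · simp only [Finset.mem_biUnion, Finset.mem_filter, Finset.mem_univ, true_and]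
        exact ⟨b, hb, hbr⟩
    calc ∑ D ∈ (Finset.univ.filter (fun D => Relation.ReflTransGen E C D)).erase C, w D
        ≤ ∑ D ∈ (Finset.univ.filter (fun D => E C D)).biUnion
            (fun D => Finset.univ.filter (fun X => Relation.ReflTransGen E D X)), w D := by
          exact Finset.sum_le_sum_of_subset_of_nonneg hsub (fun i _ _ => hw i)
      _ ≤ ∑ D ∈ Finset.univ.filter (fun D => E C D),
            ∑ X ∈ Finset.univ.filter (fun X => Relation.ReflTransGen E D X), w X := by
          exact sum_biUnion_le_aux hw _ _
      _ ≤ ∑ D ∈ Finset.univ.filter (fun D => E C D), ω D := by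
          apply Finset.sum_le_sum
          intro D hD
          simp only [Finset.mem_filter] at hD
          exact ih D (Relation.TransGen.single hD.2)
end

section
/- Let N and x be real numbers with N ≥ 2 and 0 < x ≤ N, let n be a real number with n > 1, and define c(R) = (36·(1+N) + x + 7R)² / ( (36·(1+2N) + x + 35R)·(n−1) ) for R ∈ [0, N]. Then c is strictly decreasing on the interval [0, N]; equivalently, for all 0 ≤ R ≤ N, the derivative numerator satisfies 7·35·R + 2·7·(36·(1+2N) + x) − 35·(36·(1+N) + x) < 0. -/
/-- Monotonicity in the hardness reduction (p = 7, q = 36, g(p) = 35):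
`c(R) = (36(1+N)+x+7R)² / ((36(1+2N)+x+35R)(n−1))` is strictly decreasing on `[0, N]`;
equivalently the derivative numerator `7·35·R + 2·7·(36(1+2N)+x) − 35·(36(1+N)+x)` is
negative for `0 ≤ R ≤ N`. -/
theorem stmt14 (N x n : ℝ) (hN : 2 ≤ N) (hx0 : 0 < x) (hxN : x ≤ N) (hn : 1 < n) :
    StrictAntiOn
        (fun R : ℝ =>
          (36 * (1 + N) + x + 7 * R) ^ 2 / ((36 * (1 + 2 * N) + x + 35 * R) * (n - 1)))
        (Set.Icc 0 N) ∧
      ∀ R : ℝ, 0 ≤ R → R ≤ N →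
        7 * 35 * R + 2 * 7 * (36 * (1 + 2 * N) + x) - 35 * (36 * (1 + N) + x) < 0 := by
  constructor
  · intro R1 hR1 R2 hR2 h12
    obtain ⟨h10, h1N⟩ := hR1
    obtain ⟨h20, h2N⟩ := hR2
    have hn1 : (0:ℝ) < n - 1 := by linarith
    have hA1 : (0:ℝ) < 36 * (1 + N) + x + 7 * R1 := by nlinarith
    have hA2 : (0:ℝ) < 36 * (1 + N) + x + 7 * R2 := by nlinarith
    have hB1 : (0:ℝ) < 36 * (1 + 2 * N) + x + 35 * R1 := by nlinarith
    have hB2 : (0:ℝ) < 36 * (1 + 2 * N) + x + 35 * R2 := by nlinarith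
    simp only
    rw [div_lt_div_iff₀ (by positivity) (by positivity)]
    have key1 : 245 * R1 + 14 * (36 * (1 + 2 * N) + x) - 35 * (36 * (1 + N) + x) < 0 := by
      nlinarith
    have key2 : 245 * R2 + 14 * (36 * (1 + 2 * N) + x) - 35 * (36 * (1 + N) + x) < 0 := by
      nlinarith
    have hd : 0 < R2 - R1 := by linarith
    nlinarith [mul_pos hA1 hd, mul_pos hA2 hd, mul_pos hB1 hd, mul_pos hn1 hB1,
      mul_pos (mul_pos hA1 hd) hn1, mul_pos (mul_pos hA2 hd) hn1,
      mul_pos (mul_pos hB1 hd) hn1, sq_nonneg (R2 - R1)]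
  · intro R hR0 hRN
    nlinarith
end
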